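/- (Delsarte duality consequence) For a linear code C over F_{q^r} of length n, the dual (over F_q) of the subfield subcode C ∩ F_q^n equals the trace code of the dual: (C|F_q)^⊥ = tr(C^⊥). -/

import Mathlib

/-- The Euclidean dual of a linear code `C ⊆ K^n`. -/
def dualCode {K : Type*} [Field K] {n : ℕ} (C : Submodule K (Fin n → K)) :
    Submodule K (Fin n → K) where
  carrier := {v | ∀ c ∈ C, ∑ i, v i * c i = 0}
  add_mem' := by
    intro a b ha hb c hc
    simp only [Set.mem_setOf_eq, Pi.add_apply, add_mul] at *
    rw [Finset.sum_add_distrib, ha c hc, hb c hc, add_zero]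
  zero_mem' := by intro c hc; simp
  smul_mem' := by
    intro t a ha c hc
    simp only [Set.mem_setOf_eq, Pi.smul_apply, smul_eq_mul, mul_assoc]
    rw [← Finset.mul_sum, ha c hc, mul_zero]

/-- The trace map `tr(x) = x + x^q + ... + x^(q^(r-1))` on a field. -/
def tr (q r : ℕ) {K : Type*} [Field K] (a : K) : K := ∑ i ∈ Finset.range r, a ^ q ^ i

section Helpers

open Finset Polynomial

variable {K : Type*} [Field K]

/-- The dot-product bilinear form on `F^n`. -/
def dotBF (F : Type*) [CommRing F] (n : ℕ) : LinearMap.BilinForm F (Fin n → F) :=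
  LinearMap.mk₂ F (fun v w => ∑ i, v i * w i)
    (fun a b c => by simp [add_mul, Finset.sum_add_distrib])
    (fun t a c => by
      simp only [smul_eq_mul, Pi.smul_apply, Finset.mul_sum]
      exact Finset.sum_congr rfl fun i _ => by ring)
    (fun a b c => by simp [mul_add, Finset.sum_add_distrib])
    (fun t a c => by
      simp only [smul_eq_mul, Pi.smul_apply, Finset.mul_sum]
      exact Finset.sum_congr rfl fun i _ => by ring)

lemma dotBF_apply {F : Type*} [CommRing F] {n : ℕ} (v w : Fin n → F) :
    dotBF F n v w = ∑ i, v i * w i := rfl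

lemma dotBF_refl (F : Type*) [CommRing F] (n : ℕ) : (dotBF F n).IsRefl := by
  intro v w h
  rw [dotBF_apply] at h ⊢
  rw [Finset.sum_congr rfl fun i _ => mul_comm (w i) (v i)]
  exact h

lemma dotBF_nondeg (F : Type*) [CommRing F] [Nontrivial F] (n : ℕ) :
    (dotBF F n).Nondegenerate := by
  constructor
  · intro v hv
    funext i
    have h := hv (Pi.single i 1)
    rw [dotBF_apply] at h
    simpa [Pi.single_apply] using h
  · intro v hv
    funext i
    have h := hv (Pi.single i 1)
    rw [dotBF_apply] at h
    simpa [Pi.single_apply] using h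

lemma mem_dualCode {n : ℕ} {C : Submodule K (Fin n → K)} {v : Fin n → K} :
    v ∈ dualCode C ↔ ∀ c ∈ C, ∑ i, v i * c i = 0 := Iff.rfl

lemma dualCode_eq {n : ℕ} (C : Submodule K (Fin n → K)) :
    dualCode C = (dotBF K n).orthogonal C := by
  ext v
  rw [mem_dualCode, LinearMap.BilinForm.mem_orthogonal_iff]
  constructor
  · intro h c hc
    rw [dotBF_apply,
      Finset.sum_congr rfl fun i _ => mul_comm (c i) (v i)]
    exact h c hc
  · intro h c hc
    have := h c hc
    rw [dotBF_apply] at this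
    rw [Finset.sum_congr rfl fun i _ => mul_comm (v i) (c i)]
    exact this

lemma dualCode_dualCode {n : ℕ} (C : Submodule K (Fin n → K)) :
    dualCode (dualCode C) = C := by
  rw [dualCode_eq C, dualCode_eq,
    LinearMap.BilinForm.orthogonal_orthogonal (dotBF_nondeg K n) (dotBF_refl K n)]

/-- The fixed subfield of `x ↦ x^q`. -/
def fixedSubfield (q : ℕ) (K : Type*) [Field K] (hq0 : q ≠ 0)
    (hadd : ∀ x y : K, (x + y) ^ q = x ^ q + y ^ q) : Subfield K where
  carrier := {x | x ^ q = x}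
  mul_mem' := by
    intro a b ha hb
    simp only [Set.mem_setOf_eq, mul_pow] at *
    rw [ha, hb]
  one_mem' := one_pow q
  add_mem' := by
    intro a b ha hb
    simp only [Set.mem_setOf_eq] at *
    rw [hadd, ha, hb]
  zero_mem' := zero_pow hq0
  neg_mem' := by
    intro a ha
    simp only [Set.mem_setOf_eq] at *
    have h := hadd a (-a)
    rw [add_neg_cancel, zero_pow hq0, ha] at h
    exact (neg_eq_of_add_eq_zero_right h.symm).symm
  inv_mem' := by
    intro a ha
    simp only [Set.mem_setOf_eq] at *
    rw [inv_pow, ha]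

lemma pow_pow_fixed {q : ℕ} {c : K} (hc : c ^ q = c) : ∀ i : ℕ, c ^ q ^ i = c := by
  intro i
  induction i with
  | zero => simp
  | succ i ih => rw [pow_succ, pow_mul, ih, hc]

lemma tr_zero {q r : ℕ} (hq0 : q ≠ 0) : tr q r (0 : K) = 0 := by
  simp [tr, zero_pow (pow_ne_zero _ hq0)]

lemma tr_add {q r : ℕ} (hQadd : ∀ (j : ℕ) (x y : K), (x + y) ^ q ^ j = x ^ q ^ j + y ^ q ^ j)
    (x y : K) : tr q r (x + y) = tr q r x + tr q r y := by
  unfold tr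
  rw [← Finset.sum_add_distrib]
  exact Finset.sum_congr rfl fun i _ => hQadd i x y

lemma tr_sum {q r : ℕ} (hq0 : q ≠ 0)
    (hQadd : ∀ (j : ℕ) (x y : K), (x + y) ^ q ^ j = x ^ q ^ j + y ^ q ^ j)
    {ι : Type*} (s : Finset ι) (f : ι → K) :
    tr q r (∑ i ∈ s, f i) = ∑ i ∈ s, tr q r (f i) := by
  classical
  induction s using Finset.induction with
  | empty => simpa using tr_zero hq0
  | insert _ _ hx ih =>
    rw [Finset.sum_insert hx, Finset.sum_insert hx, tr_add hQadd, ih]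

lemma tr_mul_fixed {q r : ℕ} {c : K} (hc : c ^ q = c) (x : K) :
    tr q r (c * x) = c * tr q r x := by
  unfold tr
  rw [Finset.mul_sum]
  exact Finset.sum_congr rfl fun i _ => by rw [mul_pow, pow_pow_fixed hc]

lemma pow_q_sum {q : ℕ} (hq0 : q ≠ 0) (hadd : ∀ x y : K, (x + y) ^ q = x ^ q + y ^ q)
    {ι : Type*} (s : Finset ι) (f : ι → K) :
    (∑ i ∈ s, f i) ^ q = ∑ i ∈ s, (f i) ^ q := by
  classical
  induction s using Finset.induction with
  | empty => simp [zero_pow hq0]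
  | insert _ _ hx ih =>
    rw [Finset.sum_insert hx, Finset.sum_insert hx, hadd, ih]

lemma tr_pow_q {q r : ℕ} (hq0 : q ≠ 0) (hadd : ∀ x y : K, (x + y) ^ q = x ^ q + y ^ q)
    (hr : ∀ x : K, x ^ q ^ r = x) (x : K) : (tr q r x) ^ q = tr q r x := by
  unfold tr
  rw [pow_q_sum hq0 hadd]
  have h1 : ∀ i : ℕ, (x ^ q ^ i) ^ q = x ^ q ^ (i + 1) := fun i => by
    rw [← pow_mul, ← pow_succ]
  calc ∑ i ∈ range r, (x ^ q ^ i) ^ q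
      = ∑ i ∈ range r, x ^ q ^ (i + 1) := Finset.sum_congr rfl fun i _ => h1 i
    _ = ∑ i ∈ range (r + 1), x ^ q ^ i - x ^ q ^ 0 := by
        rw [Finset.sum_range_succ']; ring
    _ = ∑ i ∈ range r, x ^ q ^ i := by
        rw [Finset.sum_range_succ, hr, pow_zero, pow_one]; ring

lemma exists_tr_ne_zero {q r : ℕ} (hq2 : 2 ≤ q) (hr1 : 1 ≤ r) [Fintype K]
    (hK : Fintype.card K = q ^ r) : ∃ x : K, tr q r x ≠ 0 := by
  by_contra h
  push_neg at h
  set P : Polynomial K := ∑ i ∈ Finset.range r, Polynomial.X ^ q ^ i with hP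
  have heval : ∀ x : K, P.eval x = tr q r x := fun x => by
    simp [hP, tr, Polynomial.eval_finset_sum]
  have hdeg : P.natDegree ≤ q ^ (r - 1) := by
    apply Polynomial.natDegree_sum_le_of_forall_le
    intro i hi
    rw [Polynomial.natDegree_X_pow]
    exact Nat.pow_le_pow_right (by omega) (by simp only [Finset.mem_range] at hi; omega)
  have hP0 : P = 0 := by
    apply Polynomial.eq_zero_of_natDegree_lt_card_of_eval_eq_zero P
      (f := (id : K → K)) Function.injective_id
    · intro x; rw [id_eq, heval]; exact h x
    · calc P.natDegree ≤ q ^ (r - 1) := hdeg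
        _ < q ^ r := Nat.pow_lt_pow_right (by omega) (by omega)
        _ = Fintype.card K := hK.symm
  have hc : P.coeff 1 = 1 := by
    rw [hP, Polynomial.finset_sum_coeff]
    rw [Finset.sum_eq_single 0]
    · simp [Polynomial.coeff_X_pow]
    · intro i hi hne
      rw [Polynomial.coeff_X_pow, if_neg]
      intro hqi
      have h1 : q ^ 1 ≤ q ^ i := Nat.pow_le_pow_right (by omega) (by omega)
      simp only [pow_one] at h1
      omega
    · intro h0
      exact absurd (Finset.mem_range.mpr (by omega)) h0
  rw [hP0] at hc
  simp at hc

lemma tr_forall_zero {q r : ℕ} (hq2 : 2 ≤ q) (hr1 : 1 ≤ r) [Fintype K]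
    (hK : Fintype.card K = q ^ r) (z : K) (hz : ∀ α : K, tr q r (α * z) = 0) : z = 0 := by
  by_contra h0
  obtain ⟨x, hx⟩ := exists_tr_ne_zero hq2 hr1 hK
  apply hx
  have := hz (x * z⁻¹)
  rwa [mul_assoc, inv_mul_cancel₀ h0, mul_one] at this

end Helpers

set_option maxHeartbeats 1000000 in
set_option synthInstance.maxHeartbeats 400000 in
/-- Delsarte's theorem: `(C|F_q)^⊥ = tr(C^⊥)`, where `F_q` is the fixed field of `x ↦ x^q`
inside `F_{q^r}` and duals are Euclidean. -/
theorem stmt10 {q r n : ℕ} (hq : IsPrimePow q) {K : Type*} [Field K] [Fintype K]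
    (hK : Fintype.card K = q ^ r) (C : Submodule K (Fin n → K)) :
    {v : Fin n → K | (∀ i, (v i) ^ q = v i) ∧
        ∀ c ∈ C, (∀ i, (c i) ^ q = c i) → ∑ i, v i * c i = 0} =
      (fun c : Fin n → K => fun i => tr q r (c i)) '' (dualCode C : Set (Fin n → K)) := by
  classical
  obtain ⟨p, s, hp, hs, hps⟩ := hq
  have hp' : p.Prime := hp.nat_prime
  have hq2 : 2 ≤ q := by
    have h2 : 2 ≤ p := hp'.two_le
    have h3 : p ≤ p ^ s := Nat.le_self_pow (by omega) p
    omega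
  have hq0 : q ≠ 0 := by omega
  have hcard1 : 1 < Fintype.card K := Fintype.one_lt_card
  have hr1 : 1 ≤ r := by
    by_contra h
    have : r = 0 := by omega
    rw [this, pow_zero] at hK
    omega
  -- characteristic of K is p
  have hchar : CharP K p := by
    haveI h1 : CharP K (ringChar K) := ringChar.charP K
    obtain ⟨m, hm, hcard⟩ := FiniteField.card K (ringChar K)
    have hdvd : ringChar K ∣ p ^ (s * r) := by
      have hcard' : Fintype.card K = p ^ (s * r) := by
        rw [hK, ← hps, ← pow_mul]
      rw [← hcard']
      rw [hcard]
      exact dvd_pow_self (ringChar K) (by exact_mod_cast m.pos.ne')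
    have heq : ringChar K = p :=
      (Nat.prime_dvd_prime_iff_eq hm hp').mp (hm.dvd_of_dvd_pow hdvd)
    rwa [← heq]
  haveI := hchar
  haveI : ExpChar K p := ExpChar.prime hp'
  have hQadd : ∀ (j : ℕ) (x y : K), (x + y) ^ q ^ j = x ^ q ^ j + y ^ q ^ j := by
    intro j x y
    have key : ∀ z : K, z ^ q ^ j = iterateFrobenius K p (s * j) z := by
      intro z
      rw [iterateFrobenius_def, ← hps, pow_mul]
    rw [key, key, key, map_add]
  have hadd : ∀ x y : K, (x + y) ^ q = x ^ q + y ^ q := by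
    intro x y
    have := hQadd 1 x y
    simpa using this
  have hfixr : ∀ x : K, x ^ q ^ r = x := by
    intro x
    rw [← hK]
    exact FiniteField.pow_card x
  set F : Subfield K := fixedSubfield q K hq0 hadd with hFdef
  -- the subfield subcode, as a submodule over F
  let CF : Submodule F (Fin n → F) :=
    { carrier := {w | (fun i => (w i : K)) ∈ C}
      add_mem' := by
        intro a b ha hb
        have he : (fun i => (((a + b) i : F) : K)) =
            (fun i => ((a i : F) : K)) + fun i => ((b i : F) : K) := by
          funext i; simp
        simp only [Set.mem_setOf_eq] at *
        rw [he]
        exact C.add_mem ha hb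
      zero_mem' := by
        simp only [Set.mem_setOf_eq]
        have he : (fun i => (((0 : Fin n → F) i : F) : K)) = (0 : Fin n → K) := by
          funext i; simp
        rw [he]
        exact C.zero_mem
      smul_mem' := by
        intro a w hw
        simp only [Set.mem_setOf_eq] at *
        have he : (fun i => (((a • w) i : F) : K)) = (a : K) • fun i => ((w i : F) : K) := by
          funext i; simp [Pi.smul_apply]
        rw [he]
        exact C.smul_mem _ hw }
  -- the trace code, as a submodule over F
  let D : Submodule F (Fin n → F) :=
    { carrier := {w | ∃ u ∈ dualCode C, ∀ i, (w i : K) = tr q r (u i)}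
      add_mem' := by
        rintro a b ⟨u, hu, he⟩ ⟨u', hu', he'⟩
        exact ⟨u + u', (dualCode C).add_mem hu hu', fun i => by
          simp only [Pi.add_apply]
          push_cast
          rw [he i, he' i, tr_add hQadd]⟩
      zero_mem' :=
        ⟨0, (dualCode C).zero_mem, fun i => by simp [tr_zero hq0]⟩
      smul_mem' := by
        rintro a w ⟨u, hu, he⟩
        refine ⟨(a : K) • u, (dualCode C).smul_mem _ hu, fun i => ?_⟩
        have ha : (a : K) ^ q = (a : K) := a.2
        simp only [Pi.smul_apply, smul_eq_mul]
        push_cast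
        rw [he i, tr_mul_fixed ha] }
  -- Claim 1: the orthogonal of D is CF
  have claim1 : (dotBF F n).orthogonal D = CF := by
    ext w
    rw [LinearMap.BilinForm.mem_orthogonal_iff]
    constructor
    · intro hw
      show (fun i => ((w i : F) : K)) ∈ C
      rw [← dualCode_dualCode C, mem_dualCode]
      intro u hu
      set z : K := ∑ i, u i * (w i : K) with hz
      have hz0 : z = 0 := by
        apply tr_forall_zero hq2 hr1 hK
        intro α
        set d : Fin n → F := fun i => ⟨tr q r (α * u i), tr_pow_q hq0 hadd hfixr _⟩ with hd
        have hdD : d ∈ D := ⟨α • u, (dualCode C).smul_mem α hu, fun i => rfl⟩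
        have h0 : dotBF F n d w = 0 := hw d hdD
        have hlift : ((dotBF F n d w : F) : K) = tr q r (α * z) := by
          rw [dotBF_apply]
          push_cast
          have step : ∀ i, (tr q r (α * u i)) * (w i : K) = tr q r ((w i : K) * (α * u i)) := by
            intro i
            rw [tr_mul_fixed (w i).2, mul_comm]
          calc (∑ i, ((d i : F) : K) * ((w i : F) : K))
              = ∑ i, tr q r ((w i : K) * (α * u i)) := Finset.sum_congr rfl fun i _ => step i
            _ = tr q r (∑ i, (w i : K) * (α * u i)) := (tr_sum hq0 hQadd _ _).symm
            _ = tr q r (α * z) := by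
                congr 1
                rw [hz, Finset.mul_sum]
                exact Finset.sum_congr rfl fun i _ => by ring
        rw [← hlift, h0]
        simp
      rw [Finset.sum_congr rfl fun i _ => mul_comm ((fun i => ((w i : F) : K)) i) (u i)]
      exact hz ▸ hz0
    · intro hw d hd
      obtain ⟨u, hu, he⟩ := hd
      have hwC : (fun i => ((w i : F) : K)) ∈ C := hw
      have : ((dotBF F n d w : F) : K) = 0 := by
        rw [dotBF_apply]
        push_cast
        have step : ∀ i, ((d i : F) : K) * ((w i : F) : K)
            = tr q r ((w i : K) * u i) := by
          intro i
          rw [he i, tr_mul_fixed (w i).2, mul_comm]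
        calc (∑ i, ((d i : F) : K) * ((w i : F) : K))
            = ∑ i, tr q r ((w i : K) * u i) := Finset.sum_congr rfl fun i _ => step i
          _ = tr q r (∑ i, (w i : K) * u i) := (tr_sum hq0 hQadd _ _).symm
          _ = 0 := by
              have := hu _ hwC
              rw [Finset.sum_congr rfl fun i _ => mul_comm ((w i : K)) (u i), this,
                tr_zero hq0]
      exact_mod_cast this
  -- Claim 2: D is the orthogonal of CF
  have claim2 : D = (dotBF F n).orthogonal CF := by
    rw [← claim1, LinearMap.BilinForm.orthogonal_orthogonal (dotBF_nondeg F n) (dotBF_refl F n)]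
  -- Final translation
  ext v
  simp only [Set.mem_setOf_eq, Set.mem_image, SetLike.mem_coe]
  constructor
  · rintro ⟨hv1, hv2⟩
    set w : Fin n → F := fun i => ⟨v i, hv1 i⟩ with hwdef
    have hworth : w ∈ (dotBF F n).orthogonal CF := by
      rw [LinearMap.BilinForm.mem_orthogonal_iff]
      intro c' hc'
      have hcC : (fun i => ((c' i : F) : K)) ∈ C := hc'
      have hcfix : ∀ i, ((c' i : K)) ^ q = (c' i : K) := fun i => (c' i).2
      have h0 : ∑ i, v i * ((c' i : F) : K) = 0 := hv2 _ hcC hcfix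
      have : ((dotBF F n c' w : F) : K) = 0 := by
        rw [dotBF_apply]
        push_cast
        rw [Finset.sum_congr rfl fun i _ => mul_comm ((c' i : K)) (((w i : F) : K))]
        exact h0
      exact_mod_cast this
    rw [← claim2] at hworth
    obtain ⟨u, hu, he⟩ := hworth
    exact ⟨u, hu, by funext i; rw [← he i]⟩
  · rintro ⟨u, hu, rfl⟩
    constructor
    · intro i
      exact tr_pow_q hq0 hadd hfixr (u i)
    · intro c hc hcfix
      have step : ∀ i, tr q r (u i) * c i = tr q r (c i * u i) := by
        intro i
        rw [tr_mul_fixed (hcfix i), mul_comm]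
      calc (∑ i, tr q r (u i) * c i)
          = ∑ i, tr q r (c i * u i) := Finset.sum_congr rfl fun i _ => step i
        _ = tr q r (∑ i, c i * u i) := (tr_sum hq0 hQadd _ _).symm
        _ = 0 := by
            have := hu c hc
            rw [Finset.sum_congr rfl fun i _ => mul_comm (c i) (u i), this, tr_zero hq0]
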